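/- For every natural number p > 6, the real polynomial 𝒴_p(x) = x^{p+1}(x³ − x − 1) + x³ + x² − 1 satisfies 𝒴_p(1) = 0 and 𝒴_p′(1) = 6 − p < 0, and has a real root λ > 1. -/

import Mathlib

/-- For every natural `p > 6`, the real polynomial
`𝒴_p(x) = x^(p+1)(x³ − x − 1) + x³ + x² − 1` satisfies `𝒴_p(1) = 0` and
`𝒴_p'(1) = 6 − p < 0`, and has a real root `λ > 1`. -/
theorem stmt6 (p : ℕ) (hp : 6 < p) (Yp : ℝ → ℝ)
    (hYp : ∀ x : ℝ, Yp x = x ^ (p + 1) * (x ^ 3 - x - 1) + x ^ 3 + x ^ 2 - 1) :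
    Yp 1 = 0 ∧ deriv Yp 1 = 6 - (p : ℝ) ∧ deriv Yp 1 < 0 ∧
      ∃ lam : ℝ, 1 < lam ∧ Yp lam = 0 := by
  have hfun : Yp = fun x : ℝ => x ^ (p + 1) * (x ^ 3 - x - 1) + x ^ 3 + x ^ 2 - 1 :=
    funext hYp
  subst hfun
  have hD : ∀ x : ℝ, HasDerivAt
      (fun x : ℝ => x ^ (p + 1) * (x ^ 3 - x - 1) + x ^ 3 + x ^ 2 - 1)
      (((p+1 : ℕ) * x ^ p * (x ^ 3 - x - 1) + x ^ (p+1) * (3 * x ^ 2 - 1))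
        + 3 * x ^ 2 + 2 * x) x := by
    intro x
    have h1 : HasDerivAt (fun x : ℝ => x ^ (p+1)) ((p+1 : ℕ) * x ^ p) x := by
      simpa using hasDerivAt_pow (p+1) x
    have h2 : HasDerivAt (fun x : ℝ => x ^ 3 - x - 1) (3 * x ^ 2 - 1) x := by
      have := ((hasDerivAt_pow 3 x).sub (hasDerivAt_id x)).sub_const 1
      simpa using this
    have h3 : HasDerivAt (fun x : ℝ => x ^ 3) (3 * x ^ 2) x := by
      simpa using hasDerivAt_pow 3 x
    have h4 : HasDerivAt (fun x : ℝ => x ^ 2) (2 * x) x := by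
      simpa using hasDerivAt_pow 2 x
    have := (((h1.mul h2).add h3).add h4).sub_const 1
    exact this
  have hderiv : deriv (fun x : ℝ => x ^ (p + 1) * (x ^ 3 - x - 1) + x ^ 3 + x ^ 2 - 1) 1
      = 6 - (p : ℝ) := by
    rw [(hD 1).deriv]
    push_cast
    ring
  refine ⟨by norm_num, hderiv, ?_, ?_⟩
  · rw [hderiv]; have : (6:ℝ) < p := by exact_mod_cast hp
    linarith
  · -- intermediate value between a := 23/20 and 2
    set f : ℝ → ℝ := fun x : ℝ => x ^ (p + 1) * (x ^ 3 - x - 1) + x ^ 3 + x ^ 2 - 1 with hf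
    have hcont : Continuous f := by
      apply Continuous.sub
      · exact ((continuous_pow _).mul (by continuity)).add
          ((continuous_pow 3)) |>.add (continuous_pow 2)
      · exact continuous_const
    have ha : f (23/20) < 0 := by
      have hneg : ((23:ℝ)/20) ^ 3 - 23/20 - 1 < 0 := by norm_num
      have hpow : ((23:ℝ)/20) ^ 8 ≤ (23/20) ^ (p + 1) := by
        apply pow_le_pow_right₀ (by norm_num)
        omega
      have hmul : ((23:ℝ)/20) ^ (p+1) * ((23/20) ^ 3 - 23/20 - 1)
          ≤ (23/20 : ℝ) ^ 8 * ((23/20) ^ 3 - 23/20 - 1) :=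
        mul_le_mul_of_nonpos_right hpow (le_of_lt hneg)
      have : ((23:ℝ)/20) ^ 8 * ((23/20) ^ 3 - 23/20 - 1) + (23/20)^3 + (23/20)^2 - 1 < 0 := by
        norm_num
      simp only [hf]
      linarith
    have hb : 0 < f 2 := by
      have h2 : (0:ℝ) < 2 ^ (p+1) := by positivity
      simp only [hf]
      nlinarith
    have hsub : Set.Icc (f (23/20)) (f 2) ⊆ f '' Set.Icc (23/20) 2 :=
      intermediate_value_Icc (by norm_num) hcont.continuousOn
    obtain ⟨c, hc, hfc⟩ := hsub ⟨le_of_lt ha, le_of_lt hb⟩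
    exact ⟨c, lt_of_lt_of_le (by norm_num) hc.1, hfc⟩
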